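/- Let sinc(x) = sin(πx)/(πx) for x ≠ 0 and sinc(0) = 1, let θ > 0, and set β = ⌊1/θ⌋ and α = 1/θ − β. Then the series Σ_{ℓ∈ℤ} sinc(ℓ/θ)² converges and equals θ²·(β² + 2αβ + α). -/

import Mathlib

open Real

/-- `sinc x = sin(πx)/(πx)` for `x ≠ 0`, and `sinc 0 = 1`. -/
noncomputable def sinc (x : ℝ) : ℝ := if x = 0 then 1 else Real.sin (π * x) / (π * x)

lemma bern2 (x : ℝ) : (Polynomial.aeval x) (Polynomial.bernoulli 2) = x^2 - x + 1/6 := by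
  simp [Polynomial.bernoulli, Finset.sum_range_succ, bernoulli]
  ring

lemma cos_sum {x : ℝ} (hx : x ∈ Set.Icc (0:ℝ) 1) :
    HasSum (fun n : ℕ => 1 / (n : ℝ) ^ 2 * Real.cos (2 * π * n * x))
      (π ^ 2 * (x ^ 2 - x + 1/6)) := by
  have h := hasSum_one_div_nat_pow_mul_cos (k := 1) one_ne_zero hx
  norm_num at h
  rw [bern2] at h
  have hv : (2 * π) ^ 2 / 2 / 2 * (x ^ 2 - x + 1/6) = π ^ 2 * (x ^ 2 - x + 1/6) := by ring
  rw [hv] at h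
  simpa [one_div] using h

lemma sin_sum {x : ℝ} (hx : x ∈ Set.Icc (0:ℝ) 1) :
    HasSum (fun n : ℕ => 1 / (n : ℝ) ^ 2 * Real.sin (π * n * x) ^ 2)
      (π ^ 2 * (x - x ^ 2) / 2) := by
  have h0 := cos_sum (x := 0) (by norm_num)
  have h1 := cos_sum hx
  have h := (h0.sub h1).div_const 2
  have hfe : (fun n : ℕ => 1/(n:ℝ)^2 * Real.sin (π*n*x)^2)
      = fun n : ℕ => (1/(n:ℝ)^2 * Real.cos (2*π*n*0) - 1/(n:ℝ)^2*Real.cos (2*π*n*x))/2 := by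
    funext n
    rw [Real.sin_sq_eq_half_sub]
    rcases eq_or_ne (n:ℝ) 0 with hn | hn
    · simp [hn]
    · rw [show 2*(π*(n:ℝ)*x) = 2*π*n*x by ring]
      field_simp
      simp
  rw [hfe]
  convert h using 1
  case e'_3 => rfl
  ring

/-- Parseval computation underlying Eq. (20) of the paper: the squared ℓ²-norm of the
sampled-sinc channel taps. With `β = ⌊1/θ⌋` and `α = 1/θ - β`,
`Σ_{ℓ∈ℤ} sinc(ℓ/θ)² = θ²(β² + 2αβ + α)`. -/
theorem sampled_sinc_parseval (θ : ℝ) (hθ : 0 < θ) :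
    HasSum (fun ℓ : ℤ => (_root_.sinc ((ℓ : ℝ) / θ)) ^ 2)
      (θ ^ 2 * ((⌊1 / θ⌋ : ℝ) ^ 2 + 2 * (1 / θ - (⌊1 / θ⌋ : ℝ)) * (⌊1 / θ⌋ : ℝ)
        + (1 / θ - (⌊1 / θ⌋ : ℝ)))) := by
  have hθ0 : θ ≠ 0 := ne_of_gt hθ
  have hπ : (π : ℝ) ≠ 0 := Real.pi_ne_zero
  set β : ℤ := ⌊1 / θ⌋ with hβ
  set α : ℝ := 1 / θ - β with hα
  have h1θ : 1 / θ = α + β := by rw [hα]; ring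
  have hα0 : 0 ≤ α := sub_nonneg.mpr (Int.floor_le _)
  clear hβ
  have hα1 : α ≤ 1 := le_of_lt (by rw [hα]; linarith [Int.lt_floor_add_one (1/θ)])
  clear hα
  clear_value β α
  have hs := (sin_sum (x := α) ⟨hα0, hα1⟩).mul_left (θ^2/π^2)
  have hN := (hasSum_ite_eq (0:ℕ) (1:ℝ)).add hs
  have hfe : ∀ n : ℕ, _root_.sinc ((n:ℝ)/θ)^2
      = (if n = 0 then (1:ℝ) else 0) + θ^2/π^2 * (1/(n:ℝ)^2 * Real.sin (π*n*α)^2) := by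
    intro n
    rcases eq_or_ne n 0 with hn | hn
    · simp [hn, _root_.sinc]
    · have hnR : (n:ℝ) ≠ 0 := Nat.cast_ne_zero.mpr hn
      have hx0 : (n:ℝ)/θ ≠ 0 := div_ne_zero hnR hθ0
      have harg : π * ((n:ℝ)/θ) = π*n*α + ((n:ℤ)*β : ℤ)*π := by
        push_cast
        rw [show π * ((n:ℝ)/θ) = π*n*(1/θ) by ring, h1θ]
        ring
      have hsin : Real.sin (π * ((n:ℝ)/θ)) ^ 2 = Real.sin (π*n*α)^2 := by
        rw [harg, Real.sin_add_int_mul_pi, mul_pow]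
        rcases Int.even_or_odd ((n:ℤ)*β) with he | ho
        · rw [he.neg_one_zpow]; norm_num
        · rw [Odd.neg_one_zpow ho]; norm_num
      simp only [_root_.sinc, if_neg hx0, if_neg hn, div_pow, hsin]
      field_simp
      ring
  have hNat : HasSum (fun n : ℕ => _root_.sinc ((n:ℝ)/θ)^2)
      (1 + θ^2/π^2 * (π^2*(α - α^2)/2)) := by
    convert hN using 1
    exact funext hfe
  have hNat' : HasSum (fun n : ℕ => _root_.sinc (-(n:ℝ)/θ)^2)
      (1 + θ^2/π^2 * (π^2*(α - α^2)/2)) := by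
    convert hNat using 2 with n
    rw [neg_div, _root_.sinc, _root_.sinc]
    rcases eq_or_ne ((n:ℝ)/θ) 0 with h | h
    · simp [h]
    · rw [if_neg h, if_neg (neg_ne_zero.mpr h)]
      rw [mul_neg, Real.sin_neg]
      ring
  set S : ℝ := 1 + θ^2/π^2 * (π^2*(α - α^2)/2) with hS
  have h1 : HasSum (fun n : ℕ => _root_.sinc ((((n:ℤ)):ℝ)/θ)^2) S := by
    simp only [Int.cast_natCast]; exact hNat
  have h2 : HasSum (fun n : ℕ => _root_.sinc ((((-(n:ℤ)):ℤ):ℝ)/θ)^2) S := by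
    simp only [Int.cast_neg, Int.cast_natCast]; exact hNat'
  have hInt := HasSum.of_nat_of_neg (f := fun ℓ : ℤ => _root_.sinc ((ℓ:ℝ)/θ)^2) h1 h2
  have hf0 : (fun ℓ : ℤ => _root_.sinc ((ℓ:ℝ)/θ)^2) 0 = 1 := by norm_num [_root_.sinc]
  rw [show _root_.sinc (((0:ℤ):ℝ)/θ) ^ 2 = 1 from hf0] at hInt
  have hθα : θ * (α + (β:ℝ)) = 1 := by rw [← h1θ]; field_simp
  have hval : S + S - 1 = θ ^ 2 * ((β:ℝ) ^ 2 + 2 * α * (β:ℝ) + α) := by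
    rw [hS]
    have hpp : θ^2/π^2 * (π^2*(α - α^2)/2) = θ^2*(α - α^2)/2 := by
      field_simp
    rw [hpp]
    linear_combination (-(θ*(α+(β:ℝ))+1)) * hθα
  rw [← hval]
  exact hInt
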